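/- Let φ̂ : ℝ → ℝ be defined by φ̂(ω) = 1 for |ω| ≤ 2π/3, φ̂(ω) = cos((π/2)·ν(3|ω|/(2π) − 1)) for 2π/3 ≤ |ω| ≤ 4π/3, and φ̂(ω) = 0 otherwise, where ν is an auxiliary function with ν(x) = 0 for x ≤ 0, ν(x) = 1 for x ≥ 1, and ν(x) + ν(1−x) = 1. Then for all ω ∈ ℝ, Σ_{k ∈ ℤ} |φ̂(ω + 2πk)|² = 1. -/
import Mathlib


open Real

theorem meyer_phihat_partition_of_unity
    (ν φhat : ℝ → ℝ)
    (hν0 : ∀ x ≤ (0:ℝ), ν x = 0) (hν1 : ∀ x ≥ (1:ℝ), ν x = 1)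
    (hνs : ∀ x, ν x + ν (1 - x) = 1)
    (hφ : ∀ ω, φhat ω =
      if |ω| ≤ 2*π/3 then 1
      else if |ω| ≤ 4*π/3 then Real.cos (π/2 * ν (3*|ω|/(2*π) - 1))
      else 0) :
    ∀ ω : ℝ, ∑' k : ℤ, (φhat (ω + 2*π*k))^2 = 1 := by
  have hπ := Real.pi_pos
  have h2π : (0:ℝ) < 2*π := by linarith
  -- vanishing outside [-4π/3, 4π/3]
  have h0 : ∀ x : ℝ, 4*π/3 ≤ |x| → φhat x = 0 := by
    intro x hx
    rw [hφ]
    have h23 : ¬ |x| ≤ 2*π/3 := by push_neg; nlinarith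
    rw [if_neg h23]
    by_cases h43 : |x| ≤ 4*π/3
    · have hxe : |x| = 4*π/3 := le_antisymm h43 hx
      rw [if_pos h43, hxe]
      have he : 3*(4*π/3)/(2*π) - 1 = 1 := by field_simp; ring
      rw [he, hν1 1 le_rfl, mul_one, Real.cos_pi_div_two]
    · rw [if_neg h43]
  have h1 : ∀ x : ℝ, |x| ≤ 2*π/3 → φhat x = 1 := by
    intro x hx; rw [hφ, if_pos hx]
  -- the pair identity
  have hpair : ∀ t : ℝ,
      (Real.cos (π/2 * ν (1 - t)))^2 + (Real.cos (π/2 * ν t))^2 = 1 := by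
    intro t
    have hs := hνs t
    have hν1t : ν (1 - t) = 1 - ν t := by linarith
    rw [hν1t, show π/2 * (1 - ν t) = π/2 - π/2 * ν t by ring,
      Real.cos_pi_div_two_sub]
    exact Real.sin_sq_add_cos_sq _
  -- key three-term lemma
  have key : ∀ w : ℝ, -π ≤ w → w < π →
      (φhat (w - 2*π))^2 + (φhat w)^2 + (φhat (w + 2*π))^2 = 1 := by
    intro w hl hr
    rcases lt_or_ge w (-(2*π/3)) with hc | hc
    · -- -π ≤ w < -2π/3
      have hz : φhat (w - 2*π) = 0 := by
        apply h0
        rw [abs_of_nonpos (by nlinarith)]; nlinarith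
      have hw_abs : |w| = -w := abs_of_nonpos (by nlinarith)
      have hwp_abs : |w + 2*π| = w + 2*π := abs_of_nonneg (by nlinarith)
      have hφw : φhat w = Real.cos (π/2 * ν (3*(-w)/(2*π) - 1)) := by
        rw [hφ, if_neg (by rw [hw_abs]; push_neg; nlinarith),
          if_pos (by rw [hw_abs]; nlinarith), hw_abs]
      have hφwp : φhat (w + 2*π) = Real.cos (π/2 * ν (1 - (3*(-w)/(2*π) - 1))) := by
        rw [hφ, if_neg (by rw [hwp_abs]; push_neg; nlinarith),
          if_pos (by rw [hwp_abs]; nlinarith), hwp_abs]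
        congr 2
        field_simp
        ring
      rw [hz, hφw, hφwp]
      have hp := hpair (3*(-w)/(2*π) - 1)
      nlinarith [hp]
    · rcases le_or_gt w (2*π/3) with hc2 | hc2
      · -- |w| ≤ 2π/3
        have h1w : φhat w = 1 := h1 w (abs_le.2 ⟨by linarith, hc2⟩)
        have hz1 : φhat (w - 2*π) = 0 := by
          apply h0; rw [abs_of_nonpos (by nlinarith)]; nlinarith
        have hz2 : φhat (w + 2*π) = 0 := by
          apply h0; rw [abs_of_nonneg (by nlinarith)]; nlinarith
        rw [h1w, hz1, hz2]; norm_num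
      · -- 2π/3 < w < π
        have hz : φhat (w + 2*π) = 0 := by
          apply h0; rw [abs_of_nonneg (by nlinarith)]; nlinarith
        have hw_abs : |w| = w := abs_of_nonneg (by nlinarith)
        have hwm_abs : |w - 2*π| = 2*π - w := by
          rw [abs_of_nonpos (by nlinarith)]; ring
        have hφw : φhat w = Real.cos (π/2 * ν (3*w/(2*π) - 1)) := by
          rw [hφ, if_neg (by rw [hw_abs]; push_neg; nlinarith),
            if_pos (by rw [hw_abs]; nlinarith), hw_abs]
        have hφwm : φhat (w - 2*π) = Real.cos (π/2 * ν (1 - (3*w/(2*π) - 1))) := by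
          rw [hφ, if_neg (by rw [hwm_abs]; push_neg; nlinarith),
            if_pos (by rw [hwm_abs]; nlinarith), hwm_abs]
          congr 2
          field_simp
          ring
        rw [hz, hφw, hφwm]
        have hp := hpair (3*w/(2*π) - 1)
        nlinarith [hp]
  -- main argument
  intro ω
  set n : ℤ := ⌊(ω+π)/(2*π)⌋ with hn
  have hfl : (n:ℝ) ≤ (ω+π)/(2*π) := Int.floor_le _
  have hfl2 : (ω+π)/(2*π) < (n:ℝ)+1 := Int.lt_floor_add_one _
  have hA : (n:ℝ) * (2*π) ≤ ω + π := (le_div_iff₀ h2π).mp hfl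
  have hB : ω + π < ((n:ℝ)+1) * (2*π) := (div_lt_iff₀ h2π).mp hfl2
  have hl : -π ≤ ω - 2*π*n := by nlinarith
  have hr : ω - 2*π*n < π := by nlinarith
  have hvanish : ∀ k : ℤ, k ∉ ({-n-1, -n, -n+1} : Finset ℤ) →
      (φhat (ω + 2*π*k))^2 = 0 := by
    intro k hk
    simp only [Finset.mem_insert, Finset.mem_singleton] at hk
    push_neg at hk
    have hcase : k ≤ -n-2 ∨ -n+2 ≤ k := by omega
    have habs : 4*π/3 ≤ |ω + 2*π*k| := by
      rcases hcase with h | h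
      · have hk' : (k:ℝ) ≤ (-n:ℝ)-2 := by exact_mod_cast h
        have hmul : (2*π)*(k:ℝ) ≤ (2*π)*((-n:ℝ)-2) :=
          mul_le_mul_of_nonneg_left hk' h2π.le
        rw [abs_of_nonpos (by push_cast at hmul ⊢; nlinarith)]
        push_cast at hmul ⊢
        nlinarith
      · have hk' : (-n:ℝ)+2 ≤ (k:ℝ) := by exact_mod_cast h
        have hmul : (2*π)*((-n:ℝ)+2) ≤ (2*π)*(k:ℝ) :=
          mul_le_mul_of_nonneg_left hk' h2π.le
        rw [abs_of_nonneg (by push_cast at hmul ⊢; nlinarith)]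
        push_cast at hmul ⊢
        nlinarith
    rw [h0 _ habs]
    norm_num
  rw [tsum_eq_sum hvanish]
  have hd1 : (-n-1 : ℤ) ∉ ({-n, -n+1} : Finset ℤ) := by
    simp only [Finset.mem_insert, Finset.mem_singleton]; omega
  have hd2 : (-n : ℤ) ∉ ({-n+1} : Finset ℤ) := by
    simp only [Finset.mem_singleton]; omega
  rw [Finset.sum_insert hd1, Finset.sum_insert hd2, Finset.sum_singleton]
  have e1 : ω + 2*π*((-n-1 : ℤ):ℝ) = (ω - 2*π*n) - 2*π := by push_cast; ring
  have e2 : ω + 2*π*((-n : ℤ):ℝ) = (ω - 2*π*n) := by push_cast; ring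
  have e3 : ω + 2*π*((-n+1 : ℤ):ℝ) = (ω - 2*π*n) + 2*π := by push_cast; ring
  rw [e1, e2, e3]
  linarith [key _ hl hr]
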